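/- Let T(t) be a family of bounded operators on a Banach space, r-times differentiable in operator norm, with λ − T(t) invertible. Then for every k ≥ 1 and r ≥ 1, the r-th derivative ∂_t^r (λ − T(t))^{-k} is a finite linear combination with universal rational coefficients of terms of the form (λ−T)^{-k_0} (∂_t^{r_1} T) (λ−T)^{-k_1} ⋯ (∂_t^{r_j} T) (λ−T)^{-k_j}, where k_0 + ⋯ + k_j = k + j, r_1 + ⋯ + r_j = r, and each r_i ≥ 1. -/

import Mathlib

namespace ResolventWords

variable {X : Type*} [NormedAddCommGroup X] [NormedSpace ℂ X] [CompleteSpace X]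

noncomputable def Rr (lam : ℂ) (T : ℝ → (X →L[ℂ] X)) (t : ℝ) : X →L[ℂ] X :=
  Ring.inverse (lam • (1 : X →L[ℂ] X) - T t)

noncomputable def tailEval (lam : ℂ) (T : ℝ → (X →L[ℂ] X)) (t : ℝ) :
    List (ℕ × ℕ) → (X →L[ℂ] X)
  | [] => 1
  | p :: L => iteratedDeriv p.1 T t * Rr lam T t ^ p.2 * tailEval lam T t L

noncomputable def wEval (lam : ℂ) (T : ℝ → (X →L[ℂ] X)) (t : ℝ)
    (w : ℕ × List (ℕ × ℕ)) : X →L[ℂ] X :=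
  Rr lam T t ^ w.1 * tailEval lam T t w.2

def dTail : List (ℕ × ℕ) → List (List (ℕ × ℕ))
  | [] => []
  | p :: L =>
      ((p.1 + 1, p.2) :: L) ::
        (((List.range p.2).map fun i => (p.1, i + 1) :: (1, p.2 - i) :: L) ++
          (dTail L).map fun M => p :: M)

def dWord (w : ℕ × List (ℕ × ℕ)) : List (ℕ × List (ℕ × ℕ)) :=
  ((List.range w.1).map fun i => (i + 1, (1, w.1 - i) :: w.2)) ++
    (dTail w.2).map fun M => (w.1, M)

def words (k : ℕ) : ℕ → List (ℕ × List (ℕ × ℕ))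
  | 0 => [(k, [])]
  | r + 1 => (words k r).flatMap dWord

def Good (k r : ℕ) (w : ℕ × List (ℕ × ℕ)) : Prop :=
  w.1 + (w.2.map Prod.snd).sum = k + w.2.length ∧
    (w.2.map Prod.fst).sum = r ∧ ∀ p ∈ w.2, 1 ≤ p.1

lemma dTail_spec : ∀ (L : List (ℕ × ℕ)), ∀ M ∈ dTail L,
    (M.map Prod.snd).sum + L.length = (L.map Prod.snd).sum + M.length ∧
      (M.map Prod.fst).sum = (L.map Prod.fst).sum + 1 ∧
      ((∀ p ∈ L, 1 ≤ p.1) → ∀ p ∈ M, 1 ≤ p.1) := by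
  intro L
  induction L with
  | nil => simp [dTail]
  | cons p L ih =>
    intro M hM
    simp only [dTail, List.mem_cons, List.mem_append, List.mem_map, List.mem_range] at hM
    rcases hM with rfl | ⟨i, hi, rfl⟩ | ⟨M', hM', rfl⟩
    · refine ⟨by simp, by simp [add_assoc, add_comm, add_left_comm], ?_⟩
      intro h q hq
      rcases List.mem_cons.1 hq with rfl | hq
      · omega
      · exact h q (List.mem_cons_of_mem _ hq)
    · refine ⟨by simp; omega, by simp; omega, ?_⟩
      intro h q hq
      rcases List.mem_cons.1 hq with rfl | hq
      · exact h p (List.mem_cons_self)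
      · rcases List.mem_cons.1 hq with rfl | hq
        · omega
        · exact h q (List.mem_cons_of_mem _ hq)
    · obtain ⟨h1, h2, h3⟩ := ih M' hM'
      refine ⟨by simp at h1 ⊢; omega, by simp at h2 ⊢; omega, ?_⟩
      intro h q hq
      rcases List.mem_cons.1 hq with rfl | hq
      · exact h q (List.mem_cons_self)
      · exact h3 (fun x hx => h x (List.mem_cons_of_mem _ hx)) q hq

lemma good_dWord {k r : ℕ} {w w' : ℕ × List (ℕ × ℕ)} (hw : Good k r w)
    (hw' : w' ∈ dWord w) : Good k (r + 1) w' := by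
  obtain ⟨h1, h2, h3⟩ := hw
  simp only [dWord, List.mem_append, List.mem_map, List.mem_range] at hw'
  rcases hw' with ⟨i, hi, rfl⟩ | ⟨M, hM, rfl⟩
  · refine ⟨by simp; omega, by simp; omega, ?_⟩
    intro q hq
    rcases List.mem_cons.1 hq with rfl | hq
    · omega
    · exact h3 q hq
  · obtain ⟨g1, g2, g3⟩ := dTail_spec w.2 M hM
    exact ⟨by simp at h1 g1 ⊢; omega, by show (M.map Prod.fst).sum = r + 1; omega, g3 h3⟩

lemma good_words {k r : ℕ} : ∀ w ∈ words k r, Good k r w := by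
  induction r with
  | zero => intro w hw; simp [words] at hw; subst hw; exact ⟨by simp, by simp, by simp⟩
  | succ r ih =>
    intro w hw
    simp only [words, List.mem_flatMap] at hw
    obtain ⟨v, hv, hw⟩ := hw
    exact good_dWord (ih v hv) hw


section helpers

variable {E : Type*} [NormedAddCommGroup E] [NormedSpace ℝ E]

lemma hasDerivAt_list_sum {α : Type*} (l : List α) (F : α → ℝ → E) (F' : α → E) (t₀ : ℝ)
    (h : ∀ a ∈ l, HasDerivAt (F a) (F' a) t₀) :
    HasDerivAt (fun t => (l.map (fun a => F a t)).sum) ((l.map F').sum) t₀ := by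
  induction l with
  | nil => simpa using hasDerivAt_const t₀ (0 : E)
  | cons a l ih =>
    simp only [List.map_cons, List.sum_cons]
    exact (h a (List.mem_cons_self)).add (ih fun b hb => h b (List.mem_cons_of_mem _ hb))

lemma list_sum_mul {α M : Type*} [NonUnitalNonAssocSemiring M] (l : List α) (f : α → M) (c : M) :
    (l.map f).sum * c = (l.map fun x => f x * c).sum := by
  induction l with
  | nil => simp
  | cons a l ih => simp [add_mul, ih]

lemma mul_list_sum {α M : Type*} [NonUnitalNonAssocSemiring M] (l : List α) (f : α → M) (c : M) :
    c * (l.map f).sum = (l.map fun x => c * f x).sum := by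
  induction l with
  | nil => simp
  | cons a l ih => simp [mul_add, ih]

lemma list_sum_flatMap {α β M : Type*} [AddCommMonoid M] (l : List α) (f : α → List β)
    (g : β → M) : ((l.flatMap f).map g).sum = (l.map fun a => ((f a).map g).sum).sum := by
  induction l with
  | nil => simp
  | cons a l ih => simp [List.flatMap_cons, ih]

end helpers

section analysis

variable (lam : ℂ) {n : ℕ} {T : ℝ → (X →L[ℂ] X)} (hT : ContDiff ℝ (n : ℕ∞) T)
  (hu : ∀ t, IsUnit (lam • (1 : X →L[ℂ] X) - T t))

include hT in
lemma hasDerivAt_iteratedDerivT {m : ℕ} (hm : m < n) (t₀ : ℝ) :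
    HasDerivAt (iteratedDeriv m T) (iteratedDeriv (m + 1) T t₀) t₀ := by
  have h := (hT.differentiable_iteratedDeriv m (by exact_mod_cast hm) t₀).hasDerivAt
  rwa [iteratedDeriv_succ]

include hT hu in
lemma hasDerivAt_Rr (hn : 0 < n) (t₀ : ℝ) :
    HasDerivAt (Rr lam T) (Rr lam T t₀ * iteratedDeriv 1 T t₀ * Rr lam T t₀) t₀ := by
  have hT1 : HasDerivAt T (iteratedDeriv 1 T t₀) t₀ := by
    simpa [iteratedDeriv_zero] using hasDerivAt_iteratedDerivT hT (m := 0) hn t₀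
  have hA : HasDerivAt (fun t => lam • (1 : X →L[ℂ] X) - T t)
      (0 - iteratedDeriv 1 T t₀) t₀ := (hasDerivAt_const t₀ _).sub hT1
  set u := (hu t₀).unit with hu0
  have hx : lam • (1 : X →L[ℂ] X) - T t₀ = ↑u := ((hu t₀).unit_spec).symm
  have hinv := hasFDerivAt_ringInverse (𝕜 := ℝ) u
  rw [← hx] at hinv
  have h := hinv.comp_hasDerivAt t₀ hA
  have hru : Rr lam T t₀ = (↑u⁻¹ : X →L[ℂ] X) := by
    rw [Rr, hx, Ring.inverse_unit]
  have hval : (-(ContinuousLinearMap.mulLeftRight ℝ (X →L[ℂ] X) ↑u⁻¹ ↑u⁻¹))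
      (0 - iteratedDeriv 1 T t₀)
      = Rr lam T t₀ * iteratedDeriv 1 T t₀ * Rr lam T t₀ := by
    simp [ContinuousLinearMap.mulLeftRight_apply, hru, zero_sub, mul_neg, neg_mul]
  rw [← hval]
  exact h

include hT hu in
lemma hasDerivAt_Rpow (hn : 0 < n) (m : ℕ) (t₀ : ℝ) :
    HasDerivAt (fun t => Rr lam T t ^ m)
      (((List.range m).map fun i =>
        Rr lam T t₀ ^ (i + 1) * iteratedDeriv 1 T t₀ * Rr lam T t₀ ^ (m - i)).sum) t₀ := by
  induction m with
  | zero =>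
    simp only [pow_zero, List.range_zero, List.map_nil, List.sum_nil]
    exact hasDerivAt_const t₀ 1
  | succ m ih =>
    have h := ih.mul (hasDerivAt_Rr lam hT hu hn t₀)
    have hfun : (fun t => Rr lam T t ^ (m + 1)) = fun t => Rr lam T t ^ m * Rr lam T t := by
      funext t; rw [pow_succ]
    rw [hfun]
    refine h.congr_deriv (Eq.symm ?_)
    rw [List.range_succ, List.map_append, List.sum_append, list_sum_mul]
    congr 1
    · apply congrArg
      apply List.map_congr_left
      intro i hi
      have : m + 1 - i = (m - i) + 1 := by
        simp only [List.mem_range] at hi; omega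
      rw [this, pow_succ]
      noncomm_ring
    · have : m + 1 - m = 1 := by omega
      simp only [List.map_cons, List.map_nil, List.sum_cons, List.sum_nil, add_zero, this,
        pow_one, pow_succ]
      noncomm_ring


include hT hu in
lemma hasDerivAt_tail (hn : 0 < n) : ∀ (L : List (ℕ × ℕ)), (∀ p ∈ L, p.1 < n) → ∀ t₀ : ℝ,
    HasDerivAt (fun t => tailEval lam T t L)
      (((dTail L).map (tailEval lam T t₀)).sum) t₀ := by
  intro L
  induction L with
  | nil =>
    intro _ t₀
    simpa [tailEval, dTail] using hasDerivAt_const t₀ (1 : X →L[ℂ] X)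
  | cons p L ih =>
    intro hL t₀
    have hD := hasDerivAt_iteratedDerivT hT (m := p.1) (hL p (List.mem_cons_self)) t₀
    have hP := hasDerivAt_Rpow lam hT hu hn p.2 t₀
    have hTl := ih (fun q hq => hL q (List.mem_cons_of_mem _ hq)) t₀
    have h := (hD.mul hP).mul hTl
    have hfun : (fun t => tailEval lam T t (p :: L))
        = fun t => iteratedDeriv p.1 T t * Rr lam T t ^ p.2 * tailEval lam T t L := by
      funext t; rfl
    rw [hfun]
    refine h.congr_deriv (Eq.symm ?_)
    simp only [dTail, List.map_cons, List.sum_cons, List.map_append, List.sum_append,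
      List.map_map]
    rw [add_mul, mul_list_sum, list_sum_mul, mul_list_sum, ← add_assoc]
    congr 1


include hT hu in
lemma hasDerivAt_wEval (hn : 0 < n) (w : ℕ × List (ℕ × ℕ)) (hw : ∀ p ∈ w.2, p.1 < n) (t₀ : ℝ) :
    HasDerivAt (fun t => wEval lam T t w) (((dWord w).map (wEval lam T t₀)).sum) t₀ := by
  have hP := hasDerivAt_Rpow lam hT hu hn w.1 t₀
  have hTl := hasDerivAt_tail lam hT hu hn w.2 hw t₀
  have h := hP.mul hTl
  have hfun : (fun t => wEval lam T t w)
      = fun t => Rr lam T t ^ w.1 * tailEval lam T t w.2 := rfl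
  rw [hfun]
  refine h.congr_deriv (Eq.symm ?_)
  simp only [dWord, List.map_append, List.sum_append, List.map_map]
  rw [list_sum_mul, mul_list_sum]
  congr 1

include hT hu in
lemma key (k : ℕ) : ∀ m, m ≤ n → ∀ t₀ : ℝ,
    iteratedDeriv m (fun t => Rr lam T t ^ k) t₀
      = ((words k m).map (fun w => wEval lam T t₀ w)).sum := by
  intro m
  induction m with
  | zero => intro _ t₀; simp [words, wEval, tailEval, iteratedDeriv_zero]
  | succ m ih =>
    intro hm t₀
    have hn : 0 < n := by omega
    have hfun : iteratedDeriv m (fun t => Rr lam T t ^ k)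
        = fun t => ((words k m).map (fun w => wEval lam T t w)).sum :=
      funext fun t => ih (by omega) t
    rw [iteratedDeriv_succ, hfun]
    have hs := hasDerivAt_list_sum (words k m) (fun w t => wEval lam T t w)
      (fun w => ((dWord w).map (wEval lam T t₀)).sum) t₀ ?_
    · rw [hs.deriv, show words k (m + 1) = (words k m).flatMap dWord from rfl,
        list_sum_flatMap]
    · intro w hw
      apply hasDerivAt_wEval lam hT hu hn w ?_ t₀
      intro p hp
      have hg := good_words w hw
      have hle : p.1 ≤ (w.2.map Prod.fst).sum :=
        List.single_le_sum (fun x _ => Nat.zero_le x) _ (List.mem_map_of_mem hp)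
      have := hg.2.1
      omega

end analysis

lemma sum_range_getD (L : List (ℕ × ℕ)) (g : ℕ × ℕ → ℕ) :
    ∑ l ∈ Finset.range L.length, g (L.getD l (0, 0)) = (L.map g).sum := by
  induction L with
  | nil => simp
  | cons p L ih =>
    rw [List.length_cons, Finset.sum_range_succ']
    simp only [List.getD_cons_succ, List.getD_cons_zero, ih, List.map_cons, List.sum_cons]
    omega

lemma tailEval_ofFn (lam : ℂ) (T : ℝ → (X →L[ℂ] X)) (t : ℝ) : ∀ L : List (ℕ × ℕ),
    tailEval lam T t L = (List.ofFn fun l : Fin L.length =>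
      iteratedDeriv ((L.getD (l : ℕ) (0, 0)).1) T t
        * Rr lam T t ^ ((L.getD (l : ℕ) (0, 0)).2)).prod := by
  intro L
  induction L with
  | nil => simp [tailEval]
  | cons p L ih =>
    simp only [List.length_cons, List.ofFn_succ, List.prod_cons, Fin.val_succ,
      List.getD_cons_succ, List.getD_cons_zero, Fin.val_zero]
    rw [← ih]
    rfl

end ResolventWords

/-- The `r`-th derivative of the `k`-th power of the resolvent is a universal finite linear
combination (with rational coefficients independent of `T`) of words
`(λ-T)^{-k₀} (∂ₜ^{r₁}T) (λ-T)^{-k₁} ⋯ (∂ₜ^{r_j}T) (λ-T)^{-k_j}` with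
`k₀+⋯+k_j = k+j`, `r₁+⋯+r_j = r` and `rᵢ ≥ 1`. -/
theorem iteratedDeriv_resolvent_power
    {X : Type*} [NormedAddCommGroup X] [NormedSpace ℂ X] [CompleteSpace X]
    (lam : ℂ) (k r : ℕ) (hk : 1 ≤ k) (hr : 1 ≤ r) :
    ∃ (N : ℕ) (a : Fin N → ℚ) (j : Fin N → ℕ) (ks rs : Fin N → ℕ → ℕ),
      (∀ i, ∑ l ∈ Finset.range (j i + 1), ks i l = k + j i) ∧
      (∀ i, ∑ l ∈ Finset.range (j i), rs i l = r) ∧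
      (∀ i, ∀ l < j i, 1 ≤ rs i l) ∧
      ∀ (T : ℝ → (X →L[ℂ] X)), ContDiff ℝ r T →
        (∀ t, IsUnit (lam • (1 : X →L[ℂ] X) - T t)) →
        ∀ t₀ : ℝ,
          iteratedDeriv r (fun t => (Ring.inverse (lam • (1 : X →L[ℂ] X) - T t)) ^ k) t₀ =
            ∑ i : Fin N, (a i : ℝ) •
              ((Ring.inverse (lam • (1 : X →L[ℂ] X) - T t₀)) ^ (ks i 0) *
                (List.ofFn (fun l : Fin (j i) =>
                  iteratedDeriv (rs i l) T t₀ *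
                    (Ring.inverse (lam • (1 : X →L[ℂ] X) - T t₀)) ^ (ks i (l + 1)))).prod) := by
  classical
  set W := ResolventWords.words k r with hW
  have hWgood : ∀ i : Fin W.length, ResolventWords.Good k r (W.get i) := by
    intro i
    simp only [List.get_eq_getElem]
    exact ResolventWords.good_words _ (List.getElem_mem i.2)
  refine ⟨W.length, fun _ => 1, fun i => (W.get i).2.length,
    fun i l => Nat.casesOn l (W.get i).1 (fun m => ((W.get i).2.getD m (0, 0)).2),
    fun i l => ((W.get i).2.getD l (0, 0)).1, ?_, ?_, ?_, ?_⟩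
  · intro i
    show ∑ l ∈ Finset.range ((W.get i).2.length + 1),
        (Nat.casesOn l (W.get i).1 (fun m => ((W.get i).2.getD m (0, 0)).2) : ℕ)
          = k + (W.get i).2.length
    rw [Finset.sum_range_succ']
    show (∑ l ∈ Finset.range (W.get i).2.length, ((W.get i).2.getD l (0, 0)).2)
        + (W.get i).1 = k + (W.get i).2.length
    rw [ResolventWords.sum_range_getD]
    have h2 := (hWgood i).1
    omega
  · intro i
    show ∑ l ∈ Finset.range (W.get i).2.length, ((W.get i).2.getD l (0, 0)).1 = r
    rw [ResolventWords.sum_range_getD]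
    exact (hWgood i).2.1
  · intro i l hl
    show 1 ≤ ((W.get i).2.getD l (0, 0)).1
    have hl' : l < (W.get i).2.length := hl
    rw [List.getD_eq_getElem _ _ hl']
    exact (hWgood i).2.2 _ (List.getElem_mem hl')
  · intro T hT hu t₀
    have hkey := ResolventWords.key lam hT hu k r le_rfl t₀
    have hshow : (fun t => (Ring.inverse (lam • (1 : X →L[ℂ] X) - T t)) ^ k)
        = fun t => ResolventWords.Rr lam T t ^ k := rfl
    rw [hshow, hkey]
    simp only [Rat.cast_one, one_smul]
    have hterm : ∀ i : Fin W.length,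
        (Ring.inverse (lam • (1 : X →L[ℂ] X) - T t₀)) ^ ((W.get i).1) *
          (List.ofFn (fun l : Fin (W.get i).2.length =>
            iteratedDeriv (((W.get i).2.getD (l : ℕ) (0, 0)).1) T t₀ *
              (Ring.inverse (lam • (1 : X →L[ℂ] X) - T t₀))
                ^ (((W.get i).2.getD (l : ℕ) (0, 0)).2))).prod
          = ResolventWords.wEval lam T t₀ (W.get i) := by
      intro i
      rw [ResolventWords.wEval, ResolventWords.tailEval_ofFn]
      rfl
    calc (W.map fun w => ResolventWords.wEval lam T t₀ w).sum
        = ∑ i : Fin W.length, ResolventWords.wEval lam T t₀ (W.get i) := by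
          conv_lhs => rw [← List.ofFn_get W, List.map_ofFn]
          rw [List.sum_ofFn]
          rfl
      _ = _ := by
          refine Finset.sum_congr rfl fun i _ => ?_
          exact (hterm i).symm
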